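/- arXiv:1908.05600 — 2 statements merged into one kernel-verified Lean document; each statement's English description precedes it below -/
import Mathlib

section
/- Let a > 0, D₁ > 0, D₂ > 0, τ > 0, t > 0, r₀ > 0. Set u = 1/(4·D₁·τ) + 1/(4·D₂·t), v = −a/(2·D₁·τ) − r₀/(2·D₂·t), and w = −a/(2·D₁·τ) + r₀/(2·D₂·t). Then ∫₀^∞ ĥ(r,τ)·f_{r,t}(r) dr = (a/(4·√(π·(D₁·τ + D₂·t))·r₀·τ))·exp(−a²/(4·D₁·τ) − r₀²/(4·D₂·t))·[ −exp(v²/(4u))·(v/(2u) + a)·erfc(v/(2√u)) + exp(w²/(4u))·(w/(2u) + a)·erfc(w/(2√u)) ], where erfc is the complementary error function. -/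
open MeasureTheory Real

/-- The Gauss error function. -/
noncomputable def erf (x : ℝ) : ℝ :=
  (2 / Real.sqrt π) * ∫ u in (0:ℝ)..x, Real.exp (-u ^ 2)

/-- The complementary error function. -/
noncomputable def erfc (x : ℝ) : ℝ := 1 - erf x

/-- The channel impulse response at distance `r` and elapsed time `τ`. -/
noncomputable def hCIR (a D₁ τ r : ℝ) : ℝ :=
  a / Real.sqrt (4 * π * D₁ * τ ^ 3) * (1 - a / r) * Real.exp (-(r - a) ^ 2 / (4 * D₁ * τ))

/-- The density of the distance between transmitter and receiver at time `t`. -/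
noncomputable def fdist (r₀ D₂ t x : ℝ) : ℝ :=
  if 0 < x then
    x / (r₀ * Real.sqrt (π * D₂ * t)) * Real.exp (-(x ^ 2 + r₀ ^ 2) / (4 * D₂ * t))
      * Real.sinh (r₀ * x / (2 * D₂ * t))
  else 0

open Set Filter

lemma my_shift (g : ℝ → ℝ) (a c : ℝ) :
    (∫ x in Set.Ioi a, g (x + c)) = ∫ x in Set.Ioi (a + c), g x := by
  rw [← integral_indicator measurableSet_Ioi, ← integral_indicator measurableSet_Ioi,
    ← integral_add_right_eq_self (Set.indicator (Set.Ioi (a + c)) g) c]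
  congr 1
  ext x
  simp only [Set.indicator_apply, Set.mem_Ioi, add_lt_add_iff_right]

lemma erf_hasDerivAt (x : ℝ) :
    HasDerivAt erf (2 / Real.sqrt π * Real.exp (-x ^ 2)) x := by
  have hc : Continuous fun u : ℝ => Real.exp (-u ^ 2) := by continuity
  have h := (intervalIntegral.integral_hasDerivAt_right
    (hc.intervalIntegrable 0 x)
    (hc.stronglyMeasurable.stronglyMeasurableAtFilter)
    hc.continuousAt)
  exact h.const_mul (2 / Real.sqrt π)

lemma erf_tendsto : Tendsto erf atTop (nhds 1) := by
  have hc : Continuous fun u : ℝ => Real.exp (-u ^ 2) := by continuity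
  have hint : IntegrableOn (fun u : ℝ => Real.exp (-u ^ 2)) (Set.Ioi 0) := by
    have := (integrable_exp_neg_mul_sq (by norm_num : (0:ℝ) < 1)).integrableOn
      (s := Set.Ioi (0:ℝ))
    simpa using this
  have h := intervalIntegral_tendsto_integral_Ioi 0 hint tendsto_id
  have hval : (∫ u in Set.Ioi (0:ℝ), Real.exp (-u ^ 2)) = Real.sqrt π / 2 := by
    have := integral_gaussian_Ioi 1
    simpa using this
  rw [hval] at h
  have h2 := h.const_mul (2 / Real.sqrt π)
  have : 2 / Real.sqrt π * (Real.sqrt π / 2) = 1 := by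
    have : Real.sqrt π ≠ 0 := by positivity
    field_simp
  rw [this] at h2
  exact h2.congr (fun x => by simp only [id]; rw [erf])

lemma gauss_Ioi (m : ℝ) :
    ∫ s in Set.Ioi m, Real.exp (-s ^ 2) = Real.sqrt π / 2 * erfc m := by
  have hderiv : ∀ x ∈ Set.Ioi m,
      HasDerivAt (fun s => Real.sqrt π / 2 * erf s) (Real.exp (-x ^ 2)) x := by
    intro x _
    have h := (erf_hasDerivAt x).const_mul (Real.sqrt π / 2)
    have hπ : Real.sqrt π ≠ 0 := by positivity
    refine h.congr_deriv ?_
    field_simp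
  have hint : IntegrableOn (fun s : ℝ => Real.exp (-s ^ 2)) (Set.Ioi m) := by
    have := (integrable_exp_neg_mul_sq (by norm_num : (0:ℝ) < 1)).integrableOn
      (s := Set.Ioi m)
    simpa using this
  have htend : Tendsto (fun s => Real.sqrt π / 2 * erf s) atTop
      (nhds (Real.sqrt π / 2 * 1)) := erf_tendsto.const_mul _
  have hcont : ContinuousWithinAt (fun s => Real.sqrt π / 2 * erf s) (Set.Ici m) m :=
    ((erf_hasDerivAt m).const_mul (Real.sqrt π / 2)).continuousAt.continuousWithinAt
  have := integral_Ioi_of_hasDerivAt_of_tendsto hcont hderiv hint htend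
  rw [this, erfc]; ring

lemma gauss_Ioi_scaled {u : ℝ} (hu : 0 < u) (m : ℝ) :
    ∫ s in Set.Ioi m, Real.exp (-(u * s ^ 2))
      = Real.sqrt π / (2 * Real.sqrt u) * erfc (Real.sqrt u * m) := by
  have hsu : 0 < Real.sqrt u := Real.sqrt_pos.mpr hu
  have h := integral_comp_mul_left_Ioi (fun x => Real.exp (-x ^ 2)) m hsu
  have heq : ∀ x : ℝ, Real.exp (-(Real.sqrt u * x) ^ 2) = Real.exp (-(u * x ^ 2)) := by
    intro x
    congr 1
    rw [mul_pow, Real.sq_sqrt hu.le]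
  simp only [heq] at h
  rw [h, gauss_Ioi, smul_eq_mul]
  ring

lemma moment_Ioi {u : ℝ} (hu : 0 < u) (m : ℝ) :
    ∫ s in Set.Ioi m, s * Real.exp (-(u * s ^ 2)) = Real.exp (-(u * m ^ 2)) / (2 * u) := by
  have hderiv : ∀ x ∈ Set.Ioi m,
      HasDerivAt (fun s => -Real.exp (-(u * s ^ 2)) / (2 * u)) (x * Real.exp (-(u * x ^ 2))) x := by
    intro x _
    have h1 : HasDerivAt (fun s : ℝ => -(u * s ^ 2)) (-(u * (2 * x))) x := by
      have := ((hasDerivAt_pow 2 x).const_mul u).neg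
      simpa [mul_comm, mul_assoc, Pi.neg_def] using this
    have h2 := (h1.exp).neg.div_const (2 * u)
    refine h2.congr_deriv ?_
    field_simp
  have hint : IntegrableOn (fun s : ℝ => s * Real.exp (-(u * s ^ 2))) (Set.Ioi m) := by
    have h1' : Integrable (fun s : ℝ => s * Real.exp (-(u * s ^ 2))) := by
      simpa [neg_mul] using integrable_mul_exp_neg_mul_sq hu
    exact h1'.integrableOn
  have htend : Tendsto (fun s : ℝ => -Real.exp (-(u * s ^ 2)) / (2 * u)) atTop (nhds 0) := by
    have h1 : Tendsto (fun s : ℝ => -(u * s ^ 2)) atTop atBot := by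
      have := (tendsto_pow_atTop (two_ne_zero)).const_mul_atTop hu (f := fun s : ℝ => s ^ 2)
      exact tendsto_neg_atBot_iff.mpr this
    have h2 := (Real.tendsto_exp_atBot.comp h1).neg.div_const (2 * u)
    simpa using h2
  have hcont : ContinuousWithinAt (fun s : ℝ => -Real.exp (-(u * s ^ 2)) / (2 * u))
      (Set.Ici m) m := by
    apply Continuous.continuousWithinAt
    continuity
  have := integral_Ioi_of_hasDerivAt_of_tendsto hcont hderiv hint htend
  rw [this]
  ring

lemma exp_shift_eq {u : ℝ} (hu : 0 < u) (b r : ℝ) :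
    Real.exp (b ^ 2 / (4 * u)) * Real.exp (-(u * (r + b / (2 * u)) ^ 2))
      = Real.exp (-(u * r ^ 2) - b * r) := by
  rw [← Real.exp_add]
  congr 1
  field_simp
  ring

lemma integrable_poly_gauss {u : ℝ} (hu : 0 < u) (c : ℝ) :
    Integrable (fun s : ℝ => (s - c) * Real.exp (-(u * s ^ 2))) := by
  have h : (fun s : ℝ => (s - c) * Real.exp (-(u * s ^ 2)))
      = fun s => s * Real.exp (-(u * s ^ 2)) - c * Real.exp (-(u * s ^ 2)) := by
    funext s; ring
  rw [h]
  have h1 : Integrable (fun s : ℝ => s * Real.exp (-(u * s ^ 2))) := by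
    have := integrable_mul_exp_neg_mul_sq hu
    simpa [neg_mul] using this
  have h2 : Integrable (fun s : ℝ => Real.exp (-(u * s ^ 2))) := by
    have := integrable_exp_neg_mul_sq hu
    simpa [neg_mul] using this
  exact h1.sub (h2.const_mul c)

lemma integrableOn_main {u : ℝ} (hu : 0 < u) (b c : ℝ) :
    IntegrableOn (fun r : ℝ => (r - c) * Real.exp (-(u * r ^ 2) - b * r)) (Set.Ioi 0) := by
  have key : Integrable (fun r : ℝ =>
      Real.exp (b ^ 2 / (4 * u)) *
        ((r + b / (2 * u) - (b / (2 * u) + c)) * Real.exp (-(u * (r + b / (2 * u)) ^ 2)))) := by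
    exact (((integrable_poly_gauss hu (b / (2 * u) + c))).comp_add_right
      (b / (2 * u))).const_mul _
  have heq : (fun r : ℝ =>
      Real.exp (b ^ 2 / (4 * u)) *
        ((r + b / (2 * u) - (b / (2 * u) + c)) * Real.exp (-(u * (r + b / (2 * u)) ^ 2))))
      = fun r : ℝ => (r - c) * Real.exp (-(u * r ^ 2) - b * r) := by
    funext r
    rw [← exp_shift_eq hu b r]
    ring
  rw [← heq]
  exact key.integrableOn

set_option maxHeartbeats 1000000 in
lemma integral_main {u : ℝ} (hu : 0 < u) (b c : ℝ) :
    ∫ r in Set.Ioi (0:ℝ), (r - c) * Real.exp (-(u * r ^ 2) - b * r)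
      = 1 / (2 * u) - (b / (2 * u) + c) * (Real.sqrt π / (2 * Real.sqrt u))
          * Real.exp (b ^ 2 / (4 * u)) * erfc (Real.sqrt u * (b / (2 * u))) := by
  set m := b / (2 * u) with hm
  have heq : ∀ r : ℝ, (r - c) * Real.exp (-(u * r ^ 2) - b * r)
      = Real.exp (b ^ 2 / (4 * u)) *
          ((r + m - (m + c)) * Real.exp (-(u * (r + m) ^ 2))) := by
    intro r
    rw [← exp_shift_eq hu b r, ← hm]
    ring
  simp_rw [heq]
  rw [integral_const_mul]
  have hshift := my_shift (fun s => (s - (m + c)) * Real.exp (-(u * s ^ 2))) 0 m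
  simp only [zero_add] at hshift
  rw [hshift]
  have hsplit : ∫ s in Set.Ioi m, (s - (m + c)) * Real.exp (-(u * s ^ 2))
      = (∫ s in Set.Ioi m, s * Real.exp (-(u * s ^ 2)))
        - (m + c) * ∫ s in Set.Ioi m, Real.exp (-(u * s ^ 2)) := by
    have h1' : Integrable (fun s : ℝ => s * Real.exp (-(u * s ^ 2))) := by
      simpa [neg_mul] using integrable_mul_exp_neg_mul_sq hu
    have h2' : Integrable (fun s : ℝ => Real.exp (-(u * s ^ 2))) := by
      simpa [neg_mul] using integrable_exp_neg_mul_sq hu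
    rw [← integral_const_mul, ← integral_sub h1'.integrableOn (h2'.integrableOn.const_mul _)]
    congr 1; funext s; ring
  rw [hsplit, moment_Ioi hu, gauss_Ioi_scaled hu]
  have hexp : Real.exp (b ^ 2 / (4 * u)) * Real.exp (-(u * m ^ 2)) = 1 := by
    rw [← Real.exp_add, hm]
    rw [show b ^ 2 / (4 * u) + -(u * (b / (2 * u)) ^ 2) = 0 by field_simp; ring]
    exact Real.exp_zero
  rw [mul_sub]
  rw [show Real.exp (b ^ 2 / (4 * u)) * (Real.exp (-(u * m ^ 2)) / (2 * u))
      = (Real.exp (b ^ 2 / (4 * u)) * Real.exp (-(u * m ^ 2))) / (2 * u) by ring, hexp]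
  ring

/-- Closed form of the mean of the time-variant channel impulse response. -/
theorem mean_CIR (a D₁ D₂ τ t r₀ : ℝ) (ha : 0 < a) (hD₁ : 0 < D₁) (hD₂ : 0 < D₂)
    (hτ : 0 < τ) (ht : 0 < t) (hr₀ : 0 < r₀)
    (u v w : ℝ)
    (hu : u = 1 / (4 * D₁ * τ) + 1 / (4 * D₂ * t))
    (hv : v = -(a / (2 * D₁ * τ)) - r₀ / (2 * D₂ * t))
    (hw : w = -(a / (2 * D₁ * τ)) + r₀ / (2 * D₂ * t)) :
    ∫ r in Set.Ioi (0:ℝ), hCIR a D₁ τ r * fdist r₀ D₂ t r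
      = a / (4 * Real.sqrt (π * (D₁ * τ + D₂ * t)) * r₀ * τ)
          * Real.exp (-(a ^ 2) / (4 * D₁ * τ) - r₀ ^ 2 / (4 * D₂ * t))
          * (-(Real.exp (v ^ 2 / (4 * u)) * (v / (2 * u) + a)
                * erfc (v / (2 * Real.sqrt u)))
             + Real.exp (w ^ 2 / (4 * u)) * (w / (2 * u) + a)
                * erfc (w / (2 * Real.sqrt u))) := by
  have hπ : (0:ℝ) < π := pi_pos
  have hu' : 0 < u := by rw [hu]; positivity
  have hsu : (0:ℝ) < Real.sqrt u := Real.sqrt_pos.mpr hu'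
  set S₁ := Real.sqrt (4 * π * D₁ * τ ^ 3) with hS₁
  set S₂ := Real.sqrt (π * D₂ * t) with hS₂
  have hS₁' : 0 < S₁ := Real.sqrt_pos.mpr (by positivity)
  have hS₂' : 0 < S₂ := Real.sqrt_pos.mpr (by positivity)
  set E := Real.exp (-(a ^ 2) / (4 * D₁ * τ) - r₀ ^ 2 / (4 * D₂ * t)) with hE
  set K := a / S₁ / (r₀ * S₂) * E / 2 with hK
  have key : ∀ r ∈ Set.Ioi (0:ℝ), hCIR a D₁ τ r * fdist r₀ D₂ t r
      = K * ((r - a) * Real.exp (-(u * r ^ 2) - v * r))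
        - K * ((r - a) * Real.exp (-(u * r ^ 2) - w * r)) := by
    intro r hr
    have hr' : (r:ℝ) ≠ 0 := ne_of_gt hr
    have hE₁ : Real.exp (-(r - a) ^ 2 / (4 * D₁ * τ))
          * Real.exp (-(r ^ 2 + r₀ ^ 2) / (4 * D₂ * t))
          * Real.exp (r₀ * r / (2 * D₂ * t))
        = E * Real.exp (-(u * r ^ 2) - v * r) := by
      rw [hE, ← Real.exp_add, ← Real.exp_add, ← Real.exp_add]
      congr 1
      rw [hu, hv]
      field_simp
      ring
    have hE₂ : Real.exp (-(r - a) ^ 2 / (4 * D₁ * τ))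
          * Real.exp (-(r ^ 2 + r₀ ^ 2) / (4 * D₂ * t))
          * Real.exp (-(r₀ * r / (2 * D₂ * t)))
        = E * Real.exp (-(u * r ^ 2) - w * r) := by
      rw [hE, ← Real.exp_add, ← Real.exp_add, ← Real.exp_add]
      congr 1
      rw [hu, hw]
      field_simp
      ring
    have h1 : (1 - a / r) * r = r - a := by field_simp
    rw [hCIR, fdist, if_pos (show (0:ℝ) < r from hr), Real.sinh_eq, ← hS₁, ← hS₂, hK]
    linear_combination
      (a / S₁ / (r₀ * S₂) / 2 * ((1 - a / r) * r)) * hE₁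
      - (a / S₁ / (r₀ * S₂) / 2 * ((1 - a / r) * r)) * hE₂
      + (a / S₁ / (r₀ * S₂) / 2 *
          (E * Real.exp (-(u * r ^ 2) - v * r) - E * Real.exp (-(u * r ^ 2) - w * r))) * h1
  rw [setIntegral_congr_fun measurableSet_Ioi key]
  have hi₁ := integrableOn_main hu' v a
  have hi₂ := integrableOn_main hu' w a
  rw [integral_sub (hi₁.const_mul K) (hi₂.const_mul K), integral_const_mul, integral_const_mul,
    integral_main hu' v a, integral_main hu' w a]
  -- now scalar algebra
  have harg : ∀ x : ℝ, Real.sqrt u * (x / (2 * u)) = x / (2 * Real.sqrt u) := by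
    intro x
    have h := Real.sq_sqrt hu'.le
    field_simp
    linear_combination x * h
  rw [harg, harg]
  have hargs : 4 * π * D₁ * τ ^ 3 * (π * D₂ * t) * u
      = π * (π * (D₁ * τ + D₂ * t)) * τ ^ 2 := by
    rw [hu]; field_simp; ring
  have hs : S₁ * S₂ * Real.sqrt u
      = Real.sqrt π * Real.sqrt (π * (D₁ * τ + D₂ * t)) * τ := by
    calc S₁ * S₂ * Real.sqrt u
        = Real.sqrt (4 * π * D₁ * τ ^ 3 * (π * D₂ * t) * u) := by
          rw [hS₁, hS₂, ← Real.sqrt_mul (by positivity), ← Real.sqrt_mul (by positivity)]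
      _ = Real.sqrt (π * (π * (D₁ * τ + D₂ * t)) * τ ^ 2) := by rw [hargs]
      _ = Real.sqrt (π * (π * (D₁ * τ + D₂ * t))) * τ := by
          rw [Real.sqrt_mul (by positivity), Real.sqrt_sq hτ.le]
      _ = Real.sqrt π * Real.sqrt (π * (D₁ * τ + D₂ * t)) * τ := by
          rw [Real.sqrt_mul pi_pos.le]
  have hKC : K * (Real.sqrt π / (2 * Real.sqrt u))
      = a / (4 * Real.sqrt (π * (D₁ * τ + D₂ * t)) * r₀ * τ) * E := by
    have hP : (0:ℝ) < Real.sqrt (π * (D₁ * τ + D₂ * t)) :=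
      Real.sqrt_pos.mpr (by positivity)
    have h0 : K * (Real.sqrt π / (2 * Real.sqrt u))
        = a * E * Real.sqrt π / (4 * r₀ * (S₁ * S₂ * Real.sqrt u)) := by
      rw [hK]; field_simp; ring
    rw [h0, hs]
    have hπ' : Real.sqrt π ≠ 0 := by positivity
    field_simp
  rw [hK] at hKC ⊢
  linear_combination
    (Real.exp (w ^ 2 / (4 * u)) * (w / (2 * u) + a) * erfc (w / (2 * Real.sqrt u))
      - Real.exp (v ^ 2 / (4 * u)) * (v / (2 * u) + a) * erfc (v / (2 * Real.sqrt u))) * hKC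
end

section
/- Let η > 0, p ∈ (0,1) and ξ > η. Then the function ζ(α) = ( ξ − (α·p + η) ) / √( 2·(α·p·(1−p) + η) ) is convex on (0, ∞), i.e., its second derivative with respect to α is nonnegative for all α > 0. -/
open Real

/-- Convexity in the number of released molecules `α` of the normalized decision
statistic `ζ(α) = (ξ - (αp + η)) / √(2(αp(1-p) + η))`. -/
theorem zeta_convexOn (η p ξ : ℝ) (hη : 0 < η) (hp : p ∈ Set.Ioo (0:ℝ) 1) (hξ : η < ξ) :
    ConvexOn ℝ (Set.Ioi (0:ℝ))
      (fun α => (ξ - (α * p + η)) / Real.sqrt (2 * (α * p * (1 - p) + η))) := by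
  obtain ⟨hp0, hp1⟩ := hp
  have hc0 : 0 < p * (1 - p) := mul_pos hp0 (by linarith)
  set c : ℝ := p * (1 - p) with hc
  have hupos : ∀ x : ℝ, 0 ≤ x → 0 < 2 * (x * p * (1 - p) + η) := by
    intro x hx
    have h1p : (0:ℝ) ≤ 1 - p := by linarith
    have : 0 ≤ x * p * (1 - p) := mul_nonneg (mul_nonneg hx hp0.le) h1p
    nlinarith
  have hspos : ∀ x : ℝ, 0 ≤ x → 0 < Real.sqrt (2 * (x * p * (1 - p) + η)) :=
    fun x hx => Real.sqrt_pos.mpr (hupos x hx)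
  refine convexOn_of_hasDerivWithinAt2_nonneg (convex_Ioi 0)
    (f' := fun x => -p / Real.sqrt (2 * (x * p * (1 - p) + η))
        - (ξ - (x * p + η)) * c / (Real.sqrt (2 * (x * p * (1 - p) + η))) ^ 3)
    (f'' := fun x => 2 * p * c / (Real.sqrt (2 * (x * p * (1 - p) + η))) ^ 3
        + 3 * (ξ - (x * p + η)) * c ^ 2 / (Real.sqrt (2 * (x * p * (1 - p) + η))) ^ 5)
    ?_ ?_ ?_ ?_
  · -- continuity
    apply ContinuousOn.div
    · fun_prop
    · fun_prop
    · intro x hx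
      exact ne_of_gt (hspos x (le_of_lt hx))
  all_goals rw [interior_Ioi]
  · -- first derivative
    intro x hx
    have hx0 : (0:ℝ) < x := hx
    set s : ℝ := Real.sqrt (2 * (x * p * (1 - p) + η)) with hs
    have hs0 : 0 < s := hspos x hx0.le
    have hN : HasDerivAt (fun α : ℝ => ξ - (α * p + η)) (-p) x := by
      simpa using (((hasDerivAt_id x).mul_const p).add_const η).const_sub ξ
    have hu : HasDerivAt (fun α : ℝ => 2 * (α * p * (1 - p) + η)) (2 * c) x := by
      have := ((((hasDerivAt_id x).mul_const p).mul_const (1 - p)).add_const η).const_mul 2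
      simpa [hc, mul_assoc] using this
    have hsd : HasDerivAt (fun α : ℝ => Real.sqrt (2 * (α * p * (1 - p) + η)))
        (2 * c / (2 * s)) x := hu.sqrt (ne_of_gt (hupos x hx0.le))
    have hdiv := hN.div hsd (ne_of_gt hs0)
    have heq : (-p * s - (ξ - (x * p + η)) * (2 * c / (2 * s))) / s ^ 2
        = -p / s - (ξ - (x * p + η)) * c / s ^ 3 := by
      field_simp
    rw [heq] at hdiv
    exact hdiv.hasDerivWithinAt
  · -- second derivative
    intro x hx
    have hx0 : (0:ℝ) < x := hx
    set s : ℝ := Real.sqrt (2 * (x * p * (1 - p) + η)) with hs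
    have hs0 : 0 < s := hspos x hx0.le
    have hN : HasDerivAt (fun α : ℝ => ξ - (α * p + η)) (-p) x := by
      simpa using (((hasDerivAt_id x).mul_const p).add_const η).const_sub ξ
    have hu : HasDerivAt (fun α : ℝ => 2 * (α * p * (1 - p) + η)) (2 * c) x := by
      have := ((((hasDerivAt_id x).mul_const p).mul_const (1 - p)).add_const η).const_mul 2
      simpa [hc, mul_assoc] using this
    have hsd : HasDerivAt (fun α : ℝ => Real.sqrt (2 * (α * p * (1 - p) + η)))
        (2 * c / (2 * s)) x := hu.sqrt (ne_of_gt (hupos x hx0.le))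
    have h1 : HasDerivAt (fun α : ℝ => -p / Real.sqrt (2 * (α * p * (1 - p) + η)))
        ((0 * s - (-p) * (2 * c / (2 * s))) / s ^ 2) x :=
      (hasDerivAt_const x (-p)).div hsd (ne_of_gt hs0)
    have hs3 : HasDerivAt (fun α : ℝ => (Real.sqrt (2 * (α * p * (1 - p) + η))) ^ 3)
        ((3 : ℕ) * s ^ 2 * (2 * c / (2 * s))) x := hsd.pow 3
    have hNc : HasDerivAt (fun α : ℝ => (ξ - (α * p + η)) * c) (-p * c) x := hN.mul_const c
    have h2 : HasDerivAt
        (fun α : ℝ => (ξ - (α * p + η)) * c / (Real.sqrt (2 * (α * p * (1 - p) + η))) ^ 3)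
        ((-p * c * s ^ 3 - (ξ - (x * p + η)) * c * ((3 : ℕ) * s ^ 2 * (2 * c / (2 * s))))
          / (s ^ 3) ^ 2) x :=
      hNc.div hs3 (pow_ne_zero 3 (ne_of_gt hs0))
    have hf'' := h1.sub h2
    have heq : (0 * s - (-p) * (2 * c / (2 * s))) / s ^ 2
        - (-p * c * s ^ 3 - (ξ - (x * p + η)) * c * ((3 : ℕ) * s ^ 2 * (2 * c / (2 * s))))
          / (s ^ 3) ^ 2
        = 2 * p * c / s ^ 3 + 3 * (ξ - (x * p + η)) * c ^ 2 / s ^ 5 := by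
      field_simp
      ring
    rw [heq] at hf''
    exact hf''.hasDerivWithinAt
  · -- nonnegativity of the second derivative
    intro x hx
    have hx0 : (0:ℝ) < x := hx
    set s : ℝ := Real.sqrt (2 * (x * p * (1 - p) + η)) with hs
    have hs0 : 0 < s := hspos x hx0.le
    have hsq : s ^ 2 = 2 * (x * p * (1 - p) + η) := Real.sq_sqrt (hupos x hx0.le).le
    show 0 ≤ 2 * p * c / s ^ 3 + 3 * (ξ - (x * p + η)) * c ^ 2 / s ^ 5
    have key : 2 * p * c / s ^ 3 + 3 * (ξ - (x * p + η)) * c ^ 2 / s ^ 5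
        = (2 * p * c * s ^ 2 + 3 * (ξ - (x * p + η)) * c ^ 2) / s ^ 5 := by
      field_simp
    rw [key]
    apply div_nonneg _ (by positivity)
    rw [hsq]
    have h1 : 0 < ξ - η := by linarith
    nlinarith [mul_pos hc0 hx0, mul_pos hp0 hη, mul_pos hc0 h1, sq_nonneg c,
      mul_pos (mul_pos hc0 hc0) hx0, mul_nonneg (mul_nonneg hp0.le hc0.le) hx0.le]
end
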